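/- Let 1 < q < 2, p ≥ 4, S > 0 and K > 0. Then there exist Λ > 0 and d₀ > 0 such that for every λ ∈ (0, Λ) and all real numbers A, B, D, F with A > 0, B ≥ 0, D > 0, A + B = F + D, |F| ≤ λ K A^{q/2}, (2−q)A < (p−q)D and D ≤ S^{−p/2} A^{p/2}, one has A/2 + B/4 − F/q − D/p ≥ d₀. -/

import Mathlib

set_option maxHeartbeats 1000000 in
/-- The quantitative content of Lemma 2.8(ii) of the paper: for `1 < q < 2`, `p ≥ 4`,
`S > 0`, `K > 0` there exist `Λ > 0` and `d₀ > 0` such that for every `λ ∈ (0, Λ)` and all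
`A > 0`, `B ≥ 0`, `D > 0`, `F` with `A + B = F + D`, `|F| ≤ λ K A^{q/2}`,
`(2-q)A < (p-q)D` and `D ≤ S^{-p/2} A^{p/2}`, one has `A/2 + B/4 - F/q - D/p ≥ d₀`. -/
theorem nehari_minus_energy_pos (q p S K : ℝ) (hq1 : 1 < q) (hq2 : q < 2) (hp : 4 ≤ p)
    (hS : 0 < S) (hK : 0 < K) :
    ∃ Λ d₀ : ℝ, 0 < Λ ∧ 0 < d₀ ∧ ∀ lam A B D F : ℝ, 0 < lam → lam < Λ →
      0 < A → 0 ≤ B → 0 < D → A + B = F + D → |F| ≤ lam * K * A ^ (q / 2) →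
      (2 - q) * A < (p - q) * D → D ≤ S ^ (-(p / 2)) * A ^ (p / 2) →
      d₀ ≤ A / 2 + B / 4 - F / q - D / p := by
  have hq0 : (0:ℝ) < q := by linarith
  have hp0 : (0:ℝ) < p := by linarith
  have hpq : 0 < p - q := by linarith
  have h2q : 0 < 2 - q := by linarith
  have hp2 : 0 < p - 2 := by linarith
  have hSp : 0 < S ^ (p / 2) := Real.rpow_pos_of_pos hS _
  have hC : 0 < (2 - q) * S ^ (p / 2) / (p - q) := by positivity
  obtain ⟨C, hCdef⟩ : ∃ x : ℝ, x = (2 - q) * S ^ (p / 2) / (p - q) := ⟨_, rfl⟩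
  rw [← hCdef] at hC
  obtain ⟨A₀, hA₀def⟩ : ∃ x : ℝ, x = C ^ (2 / (p - 2)) := ⟨_, rfl⟩
  have hA₀ : 0 < A₀ := hA₀def ▸ Real.rpow_pos_of_pos hC _
  obtain ⟨e, hedef⟩ : ∃ x : ℝ, x = A₀ ^ (q / 2 - 1) := ⟨_, rfl⟩
  have he : 0 < e := hedef ▸ Real.rpow_pos_of_pos hA₀ _
  have h14 : (1:ℝ) / 4 < 1 / q := by
    apply one_div_lt_one_div_of_lt hq0; linarith
  obtain ⟨c, hcdef⟩ : ∃ x : ℝ, x = K * (1 / q - 1 / 4) := ⟨_, rfl⟩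
  have hc : 0 < c := hcdef ▸ mul_pos hK (by linarith)
  have hce : 0 < 8 * c * e := by
    have := mul_pos (mul_pos (by norm_num : (0:ℝ) < 8) hc) he
    exact this
  refine ⟨1 / (8 * c * e), A₀ / 8, one_div_pos.mpr hce, by positivity, ?_⟩
  intro lam A B D F hlam hlamΛ hA hB hD hsum hF hND hDS
  -- Step 1: lower bound on A
  have hAr : C < A ^ ((p - 2) / 2) := by
    have h1 : (2 - q) * A < (p - q) * (S ^ (-(p / 2)) * A ^ (p / 2)) := by
      calc (2 - q) * A < (p - q) * D := hND
        _ ≤ _ := by nlinarith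
    rw [Real.rpow_neg hS.le] at h1
    have key : (2 - q) * A * S ^ (p / 2) < (p - q) * A ^ (p / 2) := by
      have h2 := mul_lt_mul_of_pos_right h1 hSp
      have hid : (p - q) * ((S ^ (p / 2))⁻¹ * A ^ (p / 2)) * S ^ (p / 2)
          = (p - q) * A ^ (p / 2) := by field_simp
      rwa [hid] at h2
    have hApow : A ^ ((p - 2) / 2) = A ^ (p / 2) / A := by
      rw [show (p - 2) / 2 = p / 2 - 1 by ring, Real.rpow_sub hA, Real.rpow_one]
    rw [hApow, hCdef, div_lt_div_iff₀ hpq hA]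
    linear_combination key
  have hA₀A : A₀ < A := by
    have h2 : (0:ℝ) < 2 / (p - 2) := by positivity
    have h3 := Real.rpow_lt_rpow hC.le hAr h2
    rw [← Real.rpow_mul hA.le, show (p - 2) / 2 * (2 / (p - 2)) = 1 by
      field_simp, Real.rpow_one] at h3
    rwa [hA₀def]
  -- Step 2: A ^ (q/2) ≤ e * A
  have hAq : A ^ (q / 2) ≤ e * A := by
    have h1 : A ^ (q / 2 - 1) ≤ e := hedef ▸
      Real.rpow_le_rpow_of_nonpos hA₀ hA₀A.le (by linarith)
    have h2 : A ^ (q / 2) = A ^ (q / 2 - 1) * A := by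
      rw [← Real.rpow_add_one hA.ne' (q / 2 - 1)]; ring_nf
    rw [h2]
    exact mul_le_mul_of_nonneg_right h1 hA.le
  -- Step 3: energy identity
  have hBeq : B = F + D - A := by linarith
  have hE : A / 2 + B / 4 - F / q - D / p
      = A / 4 + F * (1 / 4 - 1 / q) + D * (1 / 4 - 1 / p) := by
    rw [hBeq]; field_simp; ring
  rw [hE]
  -- Step 4: bound the F term
  have hFterm : -(|F| * (1 / q - 1 / 4)) ≤ F * (1 / 4 - 1 / q) := by
    have h1 := mul_le_mul_of_nonneg_right (le_abs_self F)
      (by linarith : (0:ℝ) ≤ 1 / q - 1 / 4)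
    nlinarith [h1]
  have hDterm : 0 ≤ D * (1 / 4 - 1 / p) := by
    have h4p : 1 / p ≤ 1 / 4 := one_div_le_one_div_of_le (by norm_num) hp
    exact mul_nonneg hD.le (by linarith)
  have hFbound : |F| * (1 / q - 1 / 4) ≤ lam * c * (e * A) := by
    calc |F| * (1 / q - 1 / 4)
        ≤ lam * K * A ^ (q / 2) * (1 / q - 1 / 4) :=
          mul_le_mul_of_nonneg_right hF (by linarith)
      _ = lam * c * A ^ (q / 2) := by rw [hcdef]; ring
      _ ≤ lam * c * (e * A) :=
          mul_le_mul_of_nonneg_left hAq (by positivity)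
  have hsmall : lam * c * (e * A) ≤ A / 8 := by
    have h1 : lam * (c * e) ≤ 1 / 8 := by
      have h3 : 0 < c * e := mul_pos hc he
      calc lam * (c * e) ≤ 1 / (8 * c * e) * (c * e) :=
            mul_le_mul_of_nonneg_right hlamΛ.le h3.le
        _ = 1 / 8 := by field_simp
    calc lam * c * (e * A) = lam * (c * e) * A := by ring
      _ ≤ 1 / 8 * A := mul_le_mul_of_nonneg_right h1 hA.le
      _ = A / 8 := by ring
  linarith [hFterm, hDterm, hFbound, hsmall]
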